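/- Assume b = A x̄ + z, let δ' ∈ (0,1) and γ > (1+δ')/(1−δ'), let s̃ ≥ 1 be an integer with ρ₋(A, s̄+s̃) > 0, and let λ ≥ λ' > 0 both satisfy the noise-domination condition μ ≥ max{4, (γ+1)/((1−δ')γ − (1+δ'))} · ‖Aᵀz‖_∞ (for μ = λ and μ = λ'). Suppose x ∈ ℝⁿ satisfies ‖x_{S̄ᶜ}‖₀ ≤ s̃ and ω_λ(x) ≤ δ'λ, and suppose x' is a minimizer of φ_{λ'} with ‖x'_{S̄ᶜ}‖₀ ≤ s̃. Then φ_{λ'}(x) − φ_{λ'}(x') ≤ 2(1+γ)(λ + λ')(ω_λ(x) + λ − λ') s̄ / ρ₋(A, s̄+s̃). -/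

import Mathlib

open scoped BigOperators
open Matrix

noncomputable section

namespace PGH

/-- Euclidean dot product on `Fin n → ℝ`. -/
def dot {n : ℕ} (x y : Fin n → ℝ) : ℝ := ∑ i, x i * y i

/-- Squared Euclidean norm. -/
def sqnorm {n : ℕ} (x : Fin n → ℝ) : ℝ := ∑ i, (x i) ^ 2

/-- Euclidean (ℓ₂) norm. -/
noncomputable def l2 {n : ℕ} (x : Fin n → ℝ) : ℝ := Real.sqrt (sqnorm x)

/-- ℓ₁ norm. -/
def l1 {n : ℕ} (x : Fin n → ℝ) : ℝ := ∑ i, |x i|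

/-- ℓ∞ norm (maximum absolute coordinate). -/
noncomputable def linf {n : ℕ} (x : Fin n → ℝ) : ℝ := ⨆ i, |x i|

/-- Support of a vector. -/
def supp {n : ℕ} (x : Fin n → ℝ) : Finset (Fin n) := Finset.univ.filter (fun i => x i ≠ 0)

/-- Number of nonzero coordinates. -/
def l0 {n : ℕ} (x : Fin n → ℝ) : ℕ := (supp x).card

/-- Number of nonzero coordinates within the index set `S`
(i.e. `‖x_S‖₀` for the restriction of `x` to `S`). -/
def l0on {n : ℕ} (S : Finset (Fin n)) (x : Fin n → ℝ) : ℕ :=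
  (S.filter (fun i => x i ≠ 0)).card

/-- ℓ₁ norm of the restriction of `x` to the index set `S`. -/
def l1on {n : ℕ} (S : Finset (Fin n)) (x : Fin n → ℝ) : ℝ := ∑ i ∈ S, |x i|

/-- Gradient of `f(x) = (1/2)‖Ax - b‖₂²`, namely `Aᵀ(Ax - b)`. -/
def grad {m n : ℕ} (A : Matrix (Fin m) (Fin n) ℝ) (b : Fin m → ℝ) (x : Fin n → ℝ) :
    Fin n → ℝ :=
  Aᵀ.mulVec (A.mulVec x - b)

/-- Least-squares objective `f(x) = (1/2)‖Ax - b‖₂²`. -/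
def fls {m n : ℕ} (A : Matrix (Fin m) (Fin n) ℝ) (b : Fin m → ℝ) (x : Fin n → ℝ) : ℝ :=
  sqnorm (A.mulVec x - b) / 2

/-- ℓ₁-regularized least-squares objective `φ_λ(x) = f(x) + λ‖x‖₁`. -/
def phi {m n : ℕ} (A : Matrix (Fin m) (Fin n) ℝ) (b : Fin m → ℝ) (lam : ℝ)
    (x : Fin n → ℝ) : ℝ :=
  fls A b x + lam * l1 x

/-- Restricted maximal eigenvalue `ρ₊(A, s)`. -/
noncomputable def rhoPlus {m n : ℕ} (A : Matrix (Fin m) (Fin n) ℝ) (s : ℕ) : ℝ :=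
  sSup {r | ∃ x : Fin n → ℝ, x ≠ 0 ∧ l0 x ≤ s ∧ r = sqnorm (A.mulVec x) / sqnorm x}

/-- Restricted minimal eigenvalue `ρ₋(A, s)`. -/
noncomputable def rhoMinus {m n : ℕ} (A : Matrix (Fin m) (Fin n) ℝ) (s : ℕ) : ℝ :=
  sInf {r | ∃ x : Fin n → ℝ, x ≠ 0 ∧ l0 x ≤ s ∧ r = sqnorm (A.mulVec x) / sqnorm x}

/-- `ξ` is a subgradient of the ℓ₁ norm at `x`. -/
def IsSubgrad {n : ℕ} (x ξ : Fin n → ℝ) : Prop :=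
  ∀ i, (x i ≠ 0 → ξ i = Real.sign (x i)) ∧ (x i = 0 → |ξ i| ≤ 1)

/-- Optimality residue `ω_λ(x) = min_{ξ ∈ ∂‖x‖₁} ‖Aᵀ(Ax−b) + λξ‖_∞`. -/
noncomputable def omega {m n : ℕ} (A : Matrix (Fin m) (Fin n) ℝ) (b : Fin m → ℝ)
    (lam : ℝ) (x : Fin n → ℝ) : ℝ :=
  sInf {r | ∃ ξ : Fin n → ℝ, IsSubgrad x ξ ∧
    r = linf (fun i => grad A b x i + lam * ξ i)}

/-- The local model `ψ_{λ,L}(y; x)`. -/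
def psi {m n : ℕ} (A : Matrix (Fin m) (Fin n) ℝ) (b : Fin m → ℝ) (lam L : ℝ)
    (y x : Fin n → ℝ) : ℝ :=
  fls A b y + dot (grad A b y) (x - y) + L / 2 * sqnorm (x - y) + lam * l1 x

/-- The noise-domination condition
`λ ≥ max{4, (γ+1)/((1−δ')γ−(1+δ'))} ⬝ ‖Aᵀz‖_∞`. -/
def noiseCond {m n : ℕ} (A : Matrix (Fin m) (Fin n) ℝ) (z : Fin m → ℝ)
    (dp gam lam : ℝ) : Prop :=
  lam ≥ max 4 ((gam + 1) / ((1 - dp) * gam - (1 + dp))) * linf (Aᵀ.mulVec z)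

section Helpers

variable {m n : ℕ}

lemma l1_nonneg (x : Fin n → ℝ) : 0 ≤ l1 x :=
  Finset.sum_nonneg fun i _ => abs_nonneg _

lemma sqnorm_nonneg (x : Fin n → ℝ) : 0 ≤ sqnorm x :=
  Finset.sum_nonneg fun i _ => sq_nonneg _

lemma sqnorm_pos {x : Fin n → ℝ} (hx : x ≠ 0) : 0 < sqnorm x := by
  obtain ⟨i, hi⟩ : ∃ i, x i ≠ 0 := by
    by_contra h
    push_neg at h
    exact hx (funext h)
  have h1 : (0:ℝ) < (x i) ^ 2 := by positivity
  have h2 : (x i) ^ 2 ≤ sqnorm x :=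
    Finset.single_le_sum (f := fun j => (x j) ^ 2) (fun j _ => sq_nonneg _)
      (Finset.mem_univ i)
  linarith

lemma abs_le_linf (x : Fin n → ℝ) (i : Fin n) : |x i| ≤ linf x :=
  le_ciSup (f := fun j => |x j|) (Set.Finite.bddAbove (Set.finite_range _)) i

lemma linf_nonneg (x : Fin n → ℝ) : 0 ≤ linf x := by
  rcases isEmpty_or_nonempty (Fin n) with h | h
  · simp [linf, Real.iSup_of_isEmpty]
  · exact le_trans (abs_nonneg _) (abs_le_linf x h.some)

lemma dot_le_linf_mul_l1 (u v : Fin n → ℝ) : dot u v ≤ linf u * l1 v := by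
  unfold dot l1
  rw [Finset.mul_sum]
  refine Finset.sum_le_sum fun i _ => ?_
  calc u i * v i ≤ |u i * v i| := le_abs_self _
    _ = |u i| * |v i| := abs_mul _ _
    _ ≤ linf u * |v i| := mul_le_mul_of_nonneg_right (abs_le_linf u i) (abs_nonneg _)

lemma dot_transpose (A : Matrix (Fin m) (Fin n) ℝ) (v : Fin m → ℝ) (w : Fin n → ℝ) :
    dot (Aᵀ.mulVec v) w = dot v (A.mulVec w) := by
  unfold dot
  simp only [Matrix.mulVec, dotProduct, Matrix.transpose_apply,
    Finset.sum_mul, Finset.mul_sum]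
  rw [Finset.sum_comm]
  exact Finset.sum_congr rfl fun i _ => Finset.sum_congr rfl fun j _ => by ring

lemma sqnorm_add (v w : Fin m → ℝ) :
    sqnorm (fun k => v k + w k) = sqnorm v + 2 * dot v w + sqnorm w := by
  unfold sqnorm dot
  rw [Finset.mul_sum, ← Finset.sum_add_distrib, ← Finset.sum_add_distrib]
  exact Finset.sum_congr rfl fun i _ => by ring

lemma subgrad_abs_le {x ξ : Fin n → ℝ} (h : IsSubgrad x ξ) (i : Fin n) : |ξ i| ≤ 1 := by
  rcases eq_or_ne (x i) 0 with h0 | h0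
  · exact (h i).2 h0
  · rw [(h i).1 h0]
    rcases lt_trichotomy (x i) 0 with hl | hl | hl
    · simp [Real.sign_of_neg hl]
    · exact absurd hl h0
    · simp [Real.sign_of_pos hl]

lemma subgrad_mul {x ξ : Fin n → ℝ} (h : IsSubgrad x ξ) (i : Fin n) :
    ξ i * x i = |x i| := by
  rcases eq_or_ne (x i) 0 with h0 | h0
  · simp [h0]
  · rw [(h i).1 h0]
    rcases lt_trichotomy (x i) 0 with hl | hl | hl
    · rw [Real.sign_of_neg hl, abs_of_neg hl]; ring
    · exact absurd hl h0
    · rw [Real.sign_of_pos hl, abs_of_pos hl]; ring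

end Helpers
section Helpers2

variable {m n : ℕ}

lemma fls_expand (A : Matrix (Fin m) (Fin n) ℝ) (b : Fin m → ℝ) (x y : Fin n → ℝ) :
    fls A b y = fls A b x + dot (grad A b x) (fun i => y i - x i)
      + sqnorm (A.mulVec (fun i => y i - x i)) / 2 := by
  have hvw : A.mulVec y - b = fun k => (A.mulVec x - b) k
      + (A.mulVec (fun i => y i - x i)) k := by
    funext k
    have : A.mulVec (fun i => y i - x i) = A.mulVec y - A.mulVec x := by
      have : (fun i => y i - x i) = y - x := rfl
      rw [this, Matrix.mulVec_sub]
    rw [this]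
    simp
  have hgrad : dot (grad A b x) (fun i => y i - x i)
      = dot (A.mulVec x - b) (A.mulVec (fun i => y i - x i)) := by
    unfold grad
    rw [dot_transpose]
  unfold fls
  rw [hvw, sqnorm_add, hgrad]
  ring

lemma fls_convex (A : Matrix (Fin m) (Fin n) ℝ) (b : Fin m → ℝ) (x y : Fin n → ℝ) :
    fls A b x + dot (grad A b x) (fun i => y i - x i) ≤ fls A b y := by
  rw [fls_expand A b x y]
  have := sqnorm_nonneg (A.mulVec (fun i => y i - x i))
  linarith

/-- The one-dimensional perturbation inequality at a minimizer. -/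
lemma perturb (A : Matrix (Fin m) (Fin n) ℝ) (b : Fin m → ℝ) (lam : ℝ)
    (x' : Fin n → ℝ) (hmin : ∀ u, phi A b lam x' ≤ phi A b lam u)
    (i : Fin n) (t : ℝ) :
    0 ≤ t * grad A b x' i + t ^ 2 * sqnorm (fun k => A k i) / 2
      + lam * (|x' i + t| - |x' i|) := by
  set u : Fin n → ℝ := fun j => x' j + (if j = i then t else 0) with hu
  have hmv : A.mulVec u = fun k => A.mulVec x' k + t * A k i := by
    funext k
    simp only [Matrix.mulVec, dotProduct, hu, mul_add, Finset.sum_add_distrib]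
    congr 1
    rw [Finset.sum_congr rfl (fun j _ => by rw [mul_ite, mul_zero, mul_comm]),
      Finset.sum_ite_eq' Finset.univ i (fun j => t * A k j)]
    simp
  have hfls : fls A b u = fls A b x' + t * grad A b x' i
      + t ^ 2 * sqnorm (fun k => A k i) / 2 := by
    have h1 : A.mulVec u - b = fun k => (A.mulVec x' - b) k + (t * A k i) := by
      funext k; rw [hmv]; simp; ring
    have h2 : grad A b x' i = dot (A.mulVec x' - b) (fun k => A k i) := by
      unfold grad dot
      simp only [Matrix.mulVec, dotProduct, Matrix.transpose_apply]
      exact Finset.sum_congr rfl fun k _ => by ring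
    have h3 : sqnorm (fun k => (A.mulVec x' - b) k + t * (fun k => A k i) k)
        = sqnorm (A.mulVec x' - b) + 2 * dot (A.mulVec x' - b) (fun k => t * A k i)
          + sqnorm (fun k => t * A k i) := sqnorm_add _ _
    have h4 : dot (A.mulVec x' - b) (fun k => t * A k i)
        = t * dot (A.mulVec x' - b) (fun k => A k i) := by
      unfold dot; rw [Finset.mul_sum]; exact Finset.sum_congr rfl fun k _ => by ring
    have h5 : sqnorm (fun k => t * A k i) = t ^ 2 * sqnorm (fun k => A k i) := by
      unfold sqnorm; rw [Finset.mul_sum]; exact Finset.sum_congr rfl fun k _ => by ring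
    unfold fls
    rw [h1]
    simp only at h3 ⊢
    rw [h3, h4, h5, h2]
    ring
  have hl1 : l1 u = l1 x' + (|x' i + t| - |x' i|) := by
    unfold l1
    have : ∀ j ∈ Finset.univ, |u j| = |x' j| + (if j = i then |x' i + t| - |x' i| else 0) := by
      intro j _
      by_cases hj : j = i
      · subst hj; simp [hu]
      · simp [hu, hj]
    rw [Finset.sum_congr rfl this, Finset.sum_add_distrib,
      Finset.sum_ite_eq' Finset.univ i (fun _ => |x' i + t| - |x' i|)]
    simp
  have := hmin u
  unfold phi at this
  rw [hfls, hl1] at this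
  nlinarith [this]

end Helpers2
section Helpers3

variable {m n : ℕ}

lemma sign_abs_eq {a t : ℝ} (ha : a ≠ 0) (ht : |t| ≤ |a| / 2) :
    |a + t| = |a| + Real.sign a * t := by
  rcases lt_or_gt_of_ne ha with h | h
  · have h1 : a + t < 0 := by
      have := abs_le.mp ht
      rw [abs_of_neg h] at *
      linarith
    rw [abs_of_neg h1, abs_of_neg h, Real.sign_of_neg h]
    ring
  · have h1 : 0 < a + t := by
      have := abs_le.mp ht
      rw [abs_of_pos h] at *
      linarith
    rw [abs_of_pos h1, abs_of_pos h, Real.sign_of_pos h]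
    ring

set_option maxHeartbeats 1000000 in
/-- At a minimizer of `phi`, there is a subgradient at which the residue vanishes. -/
lemma minimizer_subgrad (A : Matrix (Fin m) (Fin n) ℝ) (b : Fin m → ℝ) (lam : ℝ)
    (hlam : 0 < lam) (x' : Fin n → ℝ) (hmin : ∀ u, phi A b lam x' ≤ phi A b lam u) :
    ∃ ξ : Fin n → ℝ, IsSubgrad x' ξ ∧ ∀ i, grad A b x' i + lam * ξ i = 0 := by
  have key : ∀ i, (x' i ≠ 0 → grad A b x' i = -(lam * Real.sign (x' i))) ∧
      (x' i = 0 → |grad A b x' i| ≤ lam) := by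
    intro i
    set g := grad A b x' i with hg
    set c := sqnorm (fun k => A k i) with hc
    have hc0 : 0 ≤ c := sqnorm_nonneg _
    constructor
    · intro hxi
      by_contra hne
      set h := g + lam * Real.sign (x' i) with hh
      have hh0 : h ≠ 0 := by
        intro h0
        apply hne
        have : g = -(lam * Real.sign (x' i)) := by rw [hh] at h0; linarith
        exact this
      set δ : ℝ := min (|x' i| / 2) (|h| / (c + 1)) with hδ
      have hδ0 : 0 < δ := by
        apply lt_min
        · positivity
        · positivity
      set t : ℝ := -(Real.sign h) * δ with htdef
      have hsig : Real.sign h * h = |h| := by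
        rcases lt_or_gt_of_ne hh0 with hl | hl
        · rw [Real.sign_of_neg hl, abs_of_neg hl]; ring
        · rw [Real.sign_of_pos hl, abs_of_pos hl]; ring
      have hsigsq : Real.sign h * Real.sign h = 1 := by
        rcases lt_or_gt_of_ne hh0 with hl | hl
        · rw [Real.sign_of_neg hl]; ring
        · rw [Real.sign_of_pos hl]; ring
      have habs_t : |t| ≤ |x' i| / 2 := by
        rw [htdef, abs_mul, abs_neg]
        have : |Real.sign h| = 1 := by
          rcases lt_or_gt_of_ne hh0 with hl | hl
          · rw [Real.sign_of_neg hl]; norm_num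
          · rw [Real.sign_of_pos hl]; norm_num
        rw [this, one_mul, abs_of_pos hδ0]
        exact min_le_left _ _
      have habs : |x' i + t| = |x' i| + Real.sign (x' i) * t := sign_abs_eq hxi habs_t
      have := perturb A b lam x' hmin i t
      rw [habs] at this
      have hth : t * g + lam * (Real.sign (x' i) * t) = t * h := by rw [hh]; ring
      have ht2 : t ^ 2 = δ ^ 2 := by rw [htdef]; nlinarith [hsigsq]
      have hth2 : t * h = -(δ * |h|) := by rw [htdef]; nlinarith [hsig]
      have hfin : 0 ≤ -(δ * |h|) + δ ^ 2 * c / 2 := by nlinarith [this]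
      have habsh : 0 < |h| := abs_pos.mpr hh0
      have h1 : δ * (c + 1) ≤ |h| := by
        rw [← le_div_iff₀ (by linarith : (0:ℝ) < c + 1)]
        exact min_le_right _ _
      nlinarith [hfin, mul_le_mul_of_nonneg_left h1 (le_of_lt hδ0),
        mul_pos hδ0 habsh, sq_nonneg δ]
    · intro hxi
      by_contra hne
      push_neg at hne
      have hg0 : g ≠ 0 := by
        intro h0; rw [h0] at hne; simp at hne; linarith
      set δ : ℝ := (|g| - lam) / (c + 1) with hδ
      have hδ0 : 0 < δ := by
        apply div_pos; linarith; linarith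
      set t : ℝ := -(Real.sign g) * δ with htdef
      have hsig : Real.sign g * g = |g| := by
        rcases lt_or_gt_of_ne hg0 with hl | hl
        · rw [Real.sign_of_neg hl, abs_of_neg hl]; ring
        · rw [Real.sign_of_pos hl, abs_of_pos hl]; ring
      have hsigsq : Real.sign g * Real.sign g = 1 := by
        rcases lt_or_gt_of_ne hg0 with hl | hl
        · rw [Real.sign_of_neg hl]; ring
        · rw [Real.sign_of_pos hl]; ring
      have := perturb A b lam x' hmin i t
      rw [hxi] at this
      simp only [zero_add, abs_zero, sub_zero] at this
      have habs_t : |t| = δ := by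
        rw [htdef, abs_mul, abs_neg]
        have : |Real.sign g| = 1 := by
          rcases lt_or_gt_of_ne hg0 with hl | hl
          · rw [Real.sign_of_neg hl]; norm_num
          · rw [Real.sign_of_pos hl]; norm_num
        rw [this, one_mul, abs_of_pos hδ0]
      have ht2 : t ^ 2 = δ ^ 2 := by rw [htdef]; nlinarith [hsigsq]
      have htg : t * g = -(δ * |g|) := by rw [htdef]; nlinarith [hsig]
      rw [habs_t, htg, ht2] at this
      have hδle : δ * (c + 1) = |g| - lam := by
        rw [hδ]; field_simp
      nlinarith [this, hδ0, hc0, hδle]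
  have hlam0 : lam ≠ 0 := ne_of_gt hlam
  refine ⟨fun i => -(grad A b x' i) / lam, fun i => ⟨fun hxi => ?_, fun hxi => ?_⟩,
    fun i => ?_⟩
  · show -grad A b x' i / lam = (x' i).sign
    rw [(key i).1 hxi]
    field_simp
  · show |-grad A b x' i / lam| ≤ 1
    rw [abs_div, abs_neg, abs_of_pos hlam, div_le_one hlam]
    exact (key i).2 hxi
  · show grad A b x' i + lam * (-(grad A b x' i) / lam) = 0
    field_simp
    ring

end Helpers3
section Helpers4

variable {m n : ℕ}

lemma clamp_close (p c : ℝ) (h1 : -1 ≤ c) (h2 : c ≤ 1) :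
    |max (-1) (min 1 p) - p| ≤ |c - p| := by
  rcases le_total p (-1) with h | h
  · rw [min_eq_right (h.trans (by norm_num)), max_eq_left h]
    rw [abs_of_nonneg (by linarith), abs_of_nonneg (by linarith)]
    linarith
  · rcases le_total 1 p with h' | h'
    · rw [min_eq_left h', max_eq_right (by norm_num : (-1:ℝ) ≤ 1)]
      rw [abs_of_nonpos (by linarith), abs_of_nonpos (by linarith)]
      linarith
    · rw [min_eq_right h', max_eq_right h]
      simp [abs_nonneg]

lemma omega_nonneg (A : Matrix (Fin m) (Fin n) ℝ) (b : Fin m → ℝ) (lam : ℝ)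
    (x : Fin n → ℝ) : 0 ≤ omega A b lam x := by
  apply Real.sInf_nonneg
  rintro r ⟨ξ, _, rfl⟩
  exact linf_nonneg _

lemma omega_attained (A : Matrix (Fin m) (Fin n) ℝ) (b : Fin m → ℝ) (lam : ℝ)
    (hlam : 0 < lam) (x : Fin n → ℝ) :
    ∃ ξ : Fin n → ℝ, IsSubgrad x ξ ∧
      linf (fun i => grad A b x i + lam * ξ i) ≤ omega A b lam x := by
  set ξs : Fin n → ℝ := fun i =>
    if x i = 0 then max (-1) (min 1 (-(grad A b x i) / lam)) else Real.sign (x i) with hξs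
  have hsub : IsSubgrad x ξs := by
    intro i
    constructor
    · intro hxi
      simp [hξs, hxi]
    · intro hxi
      simp only [hξs, hxi, if_true, if_pos]
      rw [abs_le]
      constructor
      · exact le_max_left _ _
      · exact max_le (by norm_num) ((min_le_left _ _))
  refine ⟨ξs, hsub, ?_⟩
  rcases isEmpty_or_nonempty (Fin n) with hE | hNE
  · rw [show linf (fun i => grad A b x i + lam * ξs i) = 0 from Real.iSup_of_isEmpty _]
    exact omega_nonneg A b lam x
  apply le_csInf
  · exact ⟨linf (fun i => grad A b x i + lam * ξs i), ξs, hsub, rfl⟩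
  rintro r ⟨ξ, hξ, rfl⟩
  apply ciSup_le
  intro i
  have hcoord : |grad A b x i + lam * ξs i| ≤ |grad A b x i + lam * ξ i| := by
    rcases eq_or_ne (x i) 0 with h0 | h0
    · have hval : ξs i = max (-1) (min 1 (-(grad A b x i) / lam)) := by simp [hξs, h0]
      set p : ℝ := -(grad A b x i) / lam with hp
      have hrw : ∀ t : ℝ, grad A b x i + lam * t = lam * (t - p) := by
        intro t
        rw [hp]
        field_simp
        ring
      rw [hval, hrw, hrw, abs_mul, abs_mul]
      apply mul_le_mul_of_nonneg_left _ (abs_nonneg _)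
      have hb1 := abs_le.mp (subgrad_abs_le hξ i)
      exact clamp_close p (ξ i) hb1.1 hb1.2
    · have h1 : ξs i = Real.sign (x i) := by simp [hξs, h0]
      have h2 : ξ i = Real.sign (x i) := (hξ i).1 h0
      rw [h1, ← h2]
  exact hcoord.trans (by simpa using abs_le_linf (fun j => grad A b x j + lam * ξ j) i)

end Helpers4
section Helpers5

variable {m n : ℕ}

lemma abs_dot_le (u v : Fin n → ℝ) : |dot u v| ≤ linf u * l1 v := by
  unfold dot l1
  calc |∑ i, u i * v i| ≤ ∑ i, |u i * v i| := Finset.abs_sum_le_sum_abs _ _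
    _ ≤ ∑ i, linf u * |v i| := by
        refine Finset.sum_le_sum fun i _ => ?_
        rw [abs_mul]
        exact mul_le_mul_of_nonneg_right (abs_le_linf u i) (abs_nonneg _)
    _ = linf u * ∑ i, |v i| := by rw [Finset.mul_sum]

lemma dot_self_eq (v : Fin m → ℝ) : dot v v = sqnorm v := by
  unfold dot sqnorm
  exact Finset.sum_congr rfl fun i _ => (sq (v i)).symm

lemma dot_add_left (u w v : Fin n → ℝ) (c : ℝ) :
    dot (fun i => u i + c * w i) v = dot u v + c * dot w v := by
  unfold dot
  rw [Finset.mul_sum, ← Finset.sum_add_distrib]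
  exact Finset.sum_congr rfl fun i _ => by ring

lemma rho_le_of_sparse (A : Matrix (Fin m) (Fin n) ℝ) (s : ℕ) (w : Fin n → ℝ)
    (hw : w ≠ 0) (hl : l0 w ≤ s) :
    rhoMinus A s * sqnorm w ≤ sqnorm (A.mulVec w) := by
  have hpos : 0 < sqnorm w := sqnorm_pos hw
  have hmem : sqnorm (A.mulVec w) / sqnorm w ∈
      {r | ∃ x : Fin n → ℝ, x ≠ 0 ∧ l0 x ≤ s ∧ r = sqnorm (A.mulVec x) / sqnorm x} :=
    ⟨w, hw, hl, rfl⟩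
  have hbdd : BddBelow {r | ∃ x : Fin n → ℝ, x ≠ 0 ∧ l0 x ≤ s ∧
      r = sqnorm (A.mulVec x) / sqnorm x} := by
    refine ⟨0, ?_⟩
    rintro r ⟨y, _, _, rfl⟩
    exact div_nonneg (sqnorm_nonneg _) (sqnorm_nonneg _)
  have := csInf_le hbdd hmem
  unfold rhoMinus
  calc sInf _ * sqnorm w ≤ (sqnorm (A.mulVec w) / sqnorm w) * sqnorm w :=
        mul_le_mul_of_nonneg_right this hpos.le
    _ = sqnorm (A.mulVec w) := by field_simp

set_option maxHeartbeats 1000000 in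
/-- Key estimation lemma: the ℓ¹ distance to the true vector. -/
lemma keyA (A : Matrix (Fin m) (Fin n) ℝ) (b : Fin m → ℝ)
    (xbar : Fin n → ℝ) (z : Fin m → ℝ) (hb : b = A.mulVec xbar + z)
    (dp gam : ℝ) (hdp0 : 0 < dp) (hdp1 : dp < 1)
    (hgam : gam > (1 + dp) / (1 - dp))
    (st : ℕ)
    (hrho : 0 < rhoMinus A ((supp xbar).card + st))
    (mu : ℝ) (hmu : 0 < mu) (hnoise : noiseCond A z dp gam mu)
    (x : Fin n → ℝ) (hxsp : l0on (supp xbar)ᶜ x ≤ st)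
    (ξ : Fin n → ℝ) (hξ : IsSubgrad x ξ)
    (hres : linf (fun i => grad A b x i + mu * ξ i) ≤ dp * mu) :
    l1 (fun i => x i - xbar i) ≤
      2 * (1 + gam) * mu * ((supp xbar).card : ℝ) /
        rhoMinus A ((supp xbar).card + st) := by
  set S := supp xbar with hS
  set sbar : ℝ := ((supp xbar).card : ℝ) with hsbar
  set ρ := rhoMinus A ((supp xbar).card + st) with hρ
  have h1dp : 0 < 1 - dp := by linarith
  have hgam1 : 1 < gam := by
    have : (1:ℝ) < (1 + dp) / (1 - dp) := by
      rw [lt_div_iff₀ h1dp]; linarith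
    linarith
  have hgp1 : 0 < gam + 1 := by linarith
  have hD : 0 < (1 - dp) * gam - (1 + dp) := by
    have := (div_lt_iff₀ h1dp).mp hgam
    nlinarith
  set ε := linf (Aᵀ.mulVec z) with hε
  have hε0 : 0 ≤ ε := linf_nonneg _
  have heps : ε * (gam + 1) ≤ mu * ((1 - dp) * gam - (1 + dp)) := by
    have h1 : ((gam + 1) / ((1 - dp) * gam - (1 + dp))) * ε ≤ mu := by
      refine le_trans (mul_le_mul_of_nonneg_right (le_max_right 4 _) hε0) hnoise
    rw [div_mul_eq_mul_div, div_le_iff₀ hD] at h1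
    nlinarith
  set Δ : Fin n → ℝ := fun i => x i - xbar i with hΔ
  have hAΔ : A.mulVec x - b = A.mulVec Δ - z := by
    have : A.mulVec Δ = A.mulVec x - A.mulVec xbar := by
      have h : Δ = x - xbar := rfl
      rw [h, Matrix.mulVec_sub]
    rw [this, hb]
    funext k; simp; ring
  have hgradx : grad A b x = Aᵀ.mulVec (A.mulVec Δ - z) := by
    unfold grad; rw [hAΔ]
  have hgradΔ : dot (grad A b x) Δ = sqnorm (A.mulVec Δ) - dot (Aᵀ.mulVec z) Δ := by
    rw [hgradx]
    have hsub : Aᵀ.mulVec (A.mulVec Δ - z) =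
        fun i => Aᵀ.mulVec (A.mulVec Δ) i + (-1) * Aᵀ.mulVec z i := by
      funext i
      rw [Matrix.mulVec_sub]
      simp only [Pi.sub_apply]
      ring
    rw [hsub, dot_add_left, dot_transpose, dot_transpose, dot_self_eq]
    ring
  set Q := sqnorm (A.mulVec Δ) with hQ
  have hQ0 : 0 ≤ Q := sqnorm_nonneg _
  set aS := l1on S Δ with haS
  set aC := l1on Sᶜ Δ with haC
  have haS0 : 0 ≤ aS := Finset.sum_nonneg fun i _ => abs_nonneg _
  have haC0 : 0 ≤ aC := Finset.sum_nonneg fun i _ => abs_nonneg _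
  have hl1split : l1 Δ = aS + aC := by
    rw [haS, haC]
    unfold l1 l1on
    rw [Finset.sum_add_sum_compl S fun i => |Δ i|]
  have hl1Δ0 : 0 ≤ l1 Δ := l1_nonneg _
  -- dot ξ Δ lower bound
  have hdotξ : l1on Sᶜ Δ - l1on S Δ ≤ dot ξ Δ := by
    have hsplit : dot ξ Δ = (∑ i ∈ S, ξ i * Δ i) + ∑ i ∈ Sᶜ, ξ i * Δ i := by
      unfold dot
      rw [Finset.sum_add_sum_compl S fun i => ξ i * Δ i]
    have hA : -(l1on S Δ) ≤ ∑ i ∈ S, ξ i * Δ i := by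
      unfold l1on
      rw [← Finset.sum_neg_distrib]
      refine Finset.sum_le_sum fun i _ => ?_
      have h1 : |ξ i * Δ i| ≤ |Δ i| := by
        rw [abs_mul]
        exact mul_le_of_le_one_left (abs_nonneg _) (subgrad_abs_le hξ i)
      have := neg_abs_le (ξ i * Δ i)
      linarith [abs_le.mp h1]
    have hB : ∑ i ∈ Sᶜ, ξ i * Δ i = l1on Sᶜ Δ := by
      unfold l1on
      refine Finset.sum_congr rfl fun i hi => ?_
      have hxbar : xbar i = 0 := by
        rw [Finset.mem_compl] at hi
        by_contra hne
        exact hi (Finset.mem_filter.mpr ⟨Finset.mem_univ i, hne⟩)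
      have hΔi : Δ i = x i := by rw [hΔ]; simp [hxbar]
      rw [hΔi, subgrad_mul hξ i]
    rw [hsplit, hB]
    linarith
  -- main inequality
  have hmain : Q ≤ (dp * mu + ε + mu) * aS + (dp * mu + ε - mu) * aC := by
    have e1 : dot (fun i => grad A b x i + mu * ξ i) Δ
        = dot (grad A b x) Δ + mu * dot ξ Δ := dot_add_left _ _ _ _
    have e2 : dot (fun i => grad A b x i + mu * ξ i) Δ ≤ dp * mu * l1 Δ := by
      refine le_trans (le_abs_self _) (le_trans (abs_dot_le _ _) ?_)
      exact mul_le_mul_of_nonneg_right hres hl1Δ0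
    have e3 : dot (Aᵀ.mulVec z) Δ ≤ ε * l1 Δ := by
      have h2 := abs_dot_le (Aᵀ.mulVec z) Δ
      rw [← hε] at h2
      exact le_trans (le_abs_self _) h2
    have e4 : mu * (l1on Sᶜ Δ - l1on S Δ) ≤ mu * dot ξ Δ :=
      mul_le_mul_of_nonneg_left hdotξ hmu.le
    have e5 : Q = dot (grad A b x) Δ + dot (Aᵀ.mulVec z) Δ := by
      rw [hgradΔ]; ring
    rw [← haS, ← haC] at e4
    rw [hl1split] at e2 e3
    linarith [e1, e2, e3, e4, e5]
  -- cone condition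
  have f1 : 2 * mu / (gam + 1) ≤ mu * (1 - dp) - ε := by
    rw [div_le_iff₀ hgp1]
    nlinarith
  have f2 : mu * (1 + dp) + ε ≤ 2 * mu * gam / (gam + 1) := by
    rw [le_div_iff₀ hgp1]
    nlinarith
  have hcone : aC ≤ gam * aS := by
    have h0 : (mu * (1 - dp) - ε) * aC ≤ (mu * (1 + dp) + ε) * aS := by linarith [hmain, hQ0]
    have c1 : (2 * mu / (gam + 1)) * aC ≤ (mu * (1 - dp) - ε) * aC :=
      mul_le_mul_of_nonneg_right f1 haC0
    have c2 : (mu * (1 + dp) + ε) * aS ≤ (2 * mu * gam / (gam + 1)) * aS :=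
      mul_le_mul_of_nonneg_right f2 haS0
    have hk : (0:ℝ) < 2 * mu / (gam + 1) := by positivity
    have : (2 * mu / (gam + 1)) * aC ≤ (2 * mu / (gam + 1)) * (gam * aS) := by
      have hrw : (2 * mu * gam / (gam + 1)) * aS = (2 * mu / (gam + 1)) * (gam * aS) := by
        field_simp
      rw [← hrw]
      exact c1.trans (h0.trans c2)
    exact le_of_mul_le_mul_left this hk
  have hQaS : Q ≤ 2 * mu * aS := by
    have hk : (0:ℝ) < 2 * mu / (gam + 1) := by positivity
    have hneg : dp * mu + ε - mu ≤ 0 := by linarith [f1, hk]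
    have h2g : 2 * mu * gam / (gam + 1) ≤ 2 * mu := by
      rw [div_le_iff₀ hgp1]
      nlinarith
    have hcoef : dp * mu + ε + mu ≤ 2 * mu := by linarith [f2, h2g]
    have hpa : (dp * mu + ε + mu) * aS ≤ 2 * mu * aS :=
      mul_le_mul_of_nonneg_right hcoef haS0
    have hpc : 0 ≤ -(dp * mu + ε - mu) * aC := mul_nonneg (by linarith) haC0
    linarith [hmain, hpa, hpc]
  -- sparsity of Δ
  have hl0Δ : l0 Δ ≤ (supp xbar).card + st := by
    have hsubset : supp Δ ⊆ S ∪ Sᶜ.filter (fun i => x i ≠ 0) := by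
      intro i hi
      rw [Finset.mem_union]
      by_cases hiS : i ∈ S
      · exact Or.inl hiS
      · refine Or.inr (Finset.mem_filter.mpr ⟨Finset.mem_compl.mpr hiS, ?_⟩)
        have hxbar : xbar i = 0 := by
          by_contra hne
          exact hiS (Finset.mem_filter.mpr ⟨Finset.mem_univ i, hne⟩)
        have hΔi : Δ i ≠ 0 := by
          have := Finset.mem_filter.mp hi
          exact this.2
        intro hxi
        apply hΔi
        rw [hΔ]; simp [hxbar, hxi]
    calc l0 Δ ≤ (S ∪ Sᶜ.filter (fun i => x i ≠ 0)).card := Finset.card_le_card hsubset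
      _ ≤ S.card + (Sᶜ.filter (fun i => x i ≠ 0)).card := Finset.card_union_le _ _
      _ ≤ (supp xbar).card + st := by
          refine add_le_add (le_of_eq rfl) ?_
          exact hxsp
  -- Cauchy-Schwarz
  have hCS : aS ^ 2 ≤ sbar * sqnorm Δ := by
    have h1 : aS ^ 2 ≤ (S.card : ℝ) * ∑ i ∈ S, |Δ i| ^ 2 := by
      have := sq_sum_le_card_mul_sum_sq (s := S) (f := fun i => |Δ i|)
      exact_mod_cast this
    have h2 : ∑ i ∈ S, |Δ i| ^ 2 ≤ sqnorm Δ := by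
      unfold sqnorm
      calc ∑ i ∈ S, |Δ i| ^ 2 = ∑ i ∈ S, (Δ i) ^ 2 :=
            Finset.sum_congr rfl fun i _ => sq_abs _
        _ ≤ ∑ i, (Δ i) ^ 2 :=
            Finset.sum_le_sum_of_subset_of_nonneg (Finset.subset_univ S)
              fun i _ _ => sq_nonneg _
    have hcard : (S.card : ℝ) = sbar := by rw [hsbar, hS]
    nlinarith [h1, h2, (Nat.cast_nonneg S.card : (0:ℝ) ≤ (S.card : ℝ))]
  have hsbar0 : 0 ≤ sbar := Nat.cast_nonneg _
  -- restricted eigenvalue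
  have hρΔ : ρ * sqnorm Δ ≤ Q := by
    rcases eq_or_ne Δ 0 with h0 | h0
    · have h1 : sqnorm Δ = 0 := by rw [h0]; unfold sqnorm; simp
      have h2 : A.mulVec Δ = 0 := by rw [h0]; simp [Matrix.mulVec_zero]
      rw [h1, hQ, h2]
      unfold sqnorm; simp
    · exact rho_le_of_sparse A _ Δ h0 hl0Δ
  -- conclude aS ≤ 2 mu sbar / ρ
  have haSfin : aS ≤ 2 * mu * sbar / ρ := by
    have k1 : ρ * aS ^ 2 ≤ ρ * (sbar * sqnorm Δ) := mul_le_mul_of_nonneg_left hCS hrho.le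
    have k2 : sbar * (ρ * sqnorm Δ) ≤ sbar * Q := mul_le_mul_of_nonneg_left hρΔ hsbar0
    have k3 : sbar * Q ≤ sbar * (2 * mu * aS) := mul_le_mul_of_nonneg_left hQaS hsbar0
    have k4 : ρ * aS ^ 2 ≤ 2 * mu * sbar * aS := by nlinarith [k1, k2, k3]
    rcases eq_or_lt_of_le haS0 with h0 | h0
    · rw [← h0]
      positivity
    · rw [le_div_iff₀ hrho]
      have k5 : (ρ * aS) * aS ≤ (2 * mu * sbar) * aS := by nlinarith [k4]
      have k6 : ρ * aS ≤ 2 * mu * sbar := le_of_mul_le_mul_right k5 h0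
      linarith
  calc l1 Δ = aS + aC := hl1split
    _ ≤ (1 + gam) * aS := by nlinarith [hcone]
    _ ≤ (1 + gam) * (2 * mu * sbar / ρ) := by
        refine mul_le_mul_of_nonneg_left haSfin (by linarith)
    _ = 2 * (1 + gam) * mu * sbar / ρ := by ring

end Helpers5
set_option maxHeartbeats 1000000 in
theorem stmt7 {m n : ℕ} (A : Matrix (Fin m) (Fin n) ℝ) (b : Fin m → ℝ)
    (xbar : Fin n → ℝ) (z : Fin m → ℝ) (hb : b = A.mulVec xbar + z)
    (dp gam : ℝ) (hdp0 : 0 < dp) (hdp1 : dp < 1)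
    (hgam : gam > (1 + dp) / (1 - dp))
    (st : ℕ) (hst : 1 ≤ st)
    (hrho : 0 < rhoMinus A ((supp xbar).card + st))
    (lam lam' : ℝ) (hlam' : 0 < lam') (hle : lam' ≤ lam)
    (hnoise : noiseCond A z dp gam lam) (hnoise' : noiseCond A z dp gam lam')
    (x : Fin n → ℝ) (hxsp : l0on (supp xbar)ᶜ x ≤ st)
    (hx : omega A b lam x ≤ dp * lam)
    (x' : Fin n → ℝ) (hmin : ∀ u, phi A b lam' x' ≤ phi A b lam' u)
    (hx'sp : l0on (supp xbar)ᶜ x' ≤ st) :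
    phi A b lam' x - phi A b lam' x' ≤
      2 * (1 + gam) * (lam + lam') * (omega A b lam x + lam - lam') *
        ((supp xbar).card : ℝ) / rhoMinus A ((supp xbar).card + st) := by
  have hlam : 0 < lam := lt_of_lt_of_le hlam' hle
  have hω0 : 0 ≤ omega A b lam x := omega_nonneg A b lam x
  obtain ⟨ξ, hξ, hξres⟩ := omega_attained A b lam hlam x
  have hresx : linf (fun i => grad A b x i + lam * ξ i) ≤ dp * lam := hξres.trans hx
  obtain ⟨ξ', hξ', hξ'eq⟩ := minimizer_subgrad A b lam' hlam' x' hmin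
  have hresx' : linf (fun i => grad A b x' i + lam' * ξ' i) ≤ dp * lam' := by
    have hz : (fun i => grad A b x' i + lam' * ξ' i) = fun _ : Fin n => (0:ℝ) :=
      funext fun i => hξ'eq i
    rw [hz]
    have h0 : linf (fun _ : Fin n => (0:ℝ)) = 0 := by
      rcases isEmpty_or_nonempty (Fin n) with hE | hNE
      · exact Real.iSup_of_isEmpty _
      · unfold linf; simp
    rw [h0]
    positivity
  have hA1 := keyA A b xbar z hb dp gam hdp0 hdp1 hgam st hrho lam hlam hnoise
    x hxsp ξ hξ hresx
  have hA2 := keyA A b xbar z hb dp gam hdp0 hdp1 hgam st hrho lam' hlam' hnoise'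
    x' hx'sp ξ' hξ' hresx'
  set d : Fin n → ℝ := fun i => x i - x' i with hd
  -- convexity bound
  have hconv : phi A b lam' x - phi A b lam' x' ≤
      dot (fun i => grad A b x i + lam' * ξ i) d := by
    have hf := fls_convex A b x x'
    have hneg : dot (grad A b x) (fun i => x' i - x i) = -(dot (grad A b x) d) := by
      unfold dot
      rw [← Finset.sum_neg_distrib]
      exact Finset.sum_congr rfl fun i _ => by simp [hd]; ring
    rw [hneg] at hf
    have hdotξd : dot ξ d = dot ξ x - dot ξ x' := by
      unfold dot
      rw [← Finset.sum_sub_distrib]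
      exact Finset.sum_congr rfl fun i _ => by simp [hd]; ring
    have hξx : dot ξ x = l1 x := by
      unfold dot l1
      exact Finset.sum_congr rfl fun i _ => subgrad_mul hξ i
    have hξx' : dot ξ x' ≤ l1 x' := by
      unfold dot l1
      refine Finset.sum_le_sum fun i _ => ?_
      calc ξ i * x' i ≤ |ξ i * x' i| := le_abs_self _
        _ = |ξ i| * |x' i| := abs_mul _ _
        _ ≤ |x' i| := mul_le_of_le_one_left (abs_nonneg _) (subgrad_abs_le hξ i)
    have hl1d : l1 x - l1 x' ≤ dot ξ d := by rw [hdotξd, hξx]; linarith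
    have hsplit : dot (fun i => grad A b x i + lam' * ξ i) d
        = dot (grad A b x) d + lam' * dot ξ d := dot_add_left _ _ _ _
    have hmul : lam' * (l1 x - l1 x') ≤ lam' * dot ξ d :=
      mul_le_mul_of_nonneg_left hl1d hlam'.le
    unfold phi
    rw [hsplit]
    linarith [hf, hmul]
  -- linf bound at level lam'
  have hlinf' : linf (fun i => grad A b x i + lam' * ξ i)
      ≤ omega A b lam x + (lam - lam') := by
    rcases isEmpty_or_nonempty (Fin n) with hE | hNE
    · have hz : linf (fun i => grad A b x i + lam' * ξ i) = 0 :=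
        Real.iSup_of_isEmpty _
      rw [hz]
      linarith
    apply ciSup_le
    intro i
    have h1 : |grad A b x i + lam' * ξ i|
        ≤ |grad A b x i + lam * ξ i| + (lam - lam') * |ξ i| := by
      have : grad A b x i + lam' * ξ i
          = (grad A b x i + lam * ξ i) - (lam - lam') * ξ i := by ring
      rw [this]
      calc |(grad A b x i + lam * ξ i) - (lam - lam') * ξ i|
          ≤ |grad A b x i + lam * ξ i| + |(lam - lam') * ξ i| := abs_sub _ _
        _ = |grad A b x i + lam * ξ i| + |lam - lam'| * |ξ i| := by rw [abs_mul]
        _ = |grad A b x i + lam * ξ i| + (lam - lam') * |ξ i| := by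
            rw [abs_of_nonneg (by linarith : (0:ℝ) ≤ lam - lam')]
    have h2 : |grad A b x i + lam * ξ i| ≤ omega A b lam x :=
      le_trans (by simpa using abs_le_linf (fun j => grad A b x j + lam * ξ j) i) hξres
    have h3 : (lam - lam') * |ξ i| ≤ (lam - lam') * 1 :=
      mul_le_mul_of_nonneg_left (subgrad_abs_le hξ i) (by linarith)
    calc |grad A b x i + lam' * ξ i|
        ≤ |grad A b x i + lam * ξ i| + (lam - lam') * |ξ i| := h1
      _ ≤ omega A b lam x + (lam - lam') := by linarith [h2, h3]
  -- triangle inequality for l1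
  have htri : l1 d ≤ l1 (fun i => x i - xbar i) + l1 (fun i => x' i - xbar i) := by
    unfold l1
    rw [← Finset.sum_add_distrib]
    refine Finset.sum_le_sum fun i _ => ?_
    have : d i = (x i - xbar i) - (x' i - xbar i) := by simp [hd]
    rw [this]
    exact abs_sub _ _
  -- combine
  set ρ := rhoMinus A ((supp xbar).card + st) with hρ
  set sbar : ℝ := ((supp xbar).card : ℝ) with hsbar
  set K : ℝ := omega A b lam x + (lam - lam') with hK
  have hK0 : 0 ≤ K := by rw [hK]; linarith
  have hld0 : 0 ≤ l1 d := l1_nonneg d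
  have step1 : phi A b lam' x - phi A b lam' x' ≤ K * l1 d := by
    calc phi A b lam' x - phi A b lam' x'
        ≤ dot (fun i => grad A b x i + lam' * ξ i) d := hconv
      _ ≤ linf (fun i => grad A b x i + lam' * ξ i) * l1 d :=
          le_trans (le_abs_self _) (abs_dot_le _ _)
      _ ≤ K * l1 d := mul_le_mul_of_nonneg_right hlinf' hld0
  have step2 : K * l1 d ≤ K * (2 * (1 + gam) * lam * sbar / ρ
      + 2 * (1 + gam) * lam' * sbar / ρ) := by
    refine mul_le_mul_of_nonneg_left ?_ hK0
    calc l1 d ≤ l1 (fun i => x i - xbar i) + l1 (fun i => x' i - xbar i) := htri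
      _ ≤ 2 * (1 + gam) * lam * sbar / ρ + 2 * (1 + gam) * lam' * sbar / ρ :=
          add_le_add hA1 hA2
  have hfinal : K * (2 * (1 + gam) * lam * sbar / ρ + 2 * (1 + gam) * lam' * sbar / ρ)
      = 2 * (1 + gam) * (lam + lam') * (omega A b lam x + lam - lam') * sbar / ρ := by
    rw [hK]
    ring
  exact step1.trans (step2.trans_eq hfinal)
end PGH
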